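/- With σ, μ, c > 0 and ζ₁ > 0 > ζ₂ the roots of (σ²/2)ζ² + μζ - c = 0, C₀ > 0 (where C₀ = 1/(ζ₁e^{ζ₁b₀} - ζ₂e^{ζ₂b₀}) and b₀ the unique zero of ζ₁²e^{ζ₁x} - ζ₂²e^{ζ₂x}), the function f(x) = C₀(e^{ζ₁x} - e^{ζ₂x}) is strictly increasing and strictly concave on [0, b₀], and f'(x) ≥ 1 for all x ∈ [0, b₀]. -/

import Mathlib

/-- With ζ₁ > 0 > ζ₂ the roots of (σ²/2)ζ² + μζ - c = 0, b₀ the unique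
zero of ζ₁²e^{ζ₁x} - ζ₂²e^{ζ₂x} and C₀ = 1/(ζ₁e^{ζ₁b₀} - ζ₂e^{ζ₂b₀}), the function
f(x) = C₀(e^{ζ₁x} - e^{ζ₂x}) is strictly increasing and strictly concave on [0,b₀],
with f'(x) ≥ 1 on [0,b₀]. -/
theorem statement3 (σ μ c ζ₁ ζ₂ b₀ : ℝ) (hσ : 0 < σ) (hμ : 0 < μ) (hc : 0 < c)
    (hζ₁ : 0 < ζ₁) (hζ₂ : ζ₂ < 0)
    (hr₁ : σ^2/2 * ζ₁^2 + μ * ζ₁ - c = 0)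
    (hr₂ : σ^2/2 * ζ₂^2 + μ * ζ₂ - c = 0)
    (hb₀ : ζ₁^2 * Real.exp (ζ₁ * b₀) = ζ₂^2 * Real.exp (ζ₂ * b₀))
    (hb₀u : ∀ x : ℝ, ζ₁^2 * Real.exp (ζ₁ * x) = ζ₂^2 * Real.exp (ζ₂ * x) → x = b₀) :
    let C₀ := 1 / (ζ₁ * Real.exp (ζ₁ * b₀) - ζ₂ * Real.exp (ζ₂ * b₀))
    let f : ℝ → ℝ := fun x => C₀ * (Real.exp (ζ₁ * x) - Real.exp (ζ₂ * x))
    StrictMonoOn f (Set.Icc 0 b₀) ∧ StrictConcaveOn ℝ (Set.Icc 0 b₀) f ∧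
      ∀ x ∈ Set.Icc 0 b₀, 1 ≤ deriv f x := by
  intro C₀ f
  have hE1 := Real.exp_pos (ζ₁ * b₀)
  have hE2 := Real.exp_pos (ζ₂ * b₀)
  have hD : 0 < ζ₁ * Real.exp (ζ₁ * b₀) - ζ₂ * Real.exp (ζ₂ * b₀) := by
    have h1 := mul_pos hζ₁ hE1
    have h2 := mul_neg_of_neg_of_pos hζ₂ hE2
    linarith
  have hC₀ : 0 < C₀ := by
    show (0:ℝ) < 1 / _
    positivity
  -- basic derivative of exp(a*x)
  have hx1 : ∀ (a x : ℝ), HasDerivAt (fun y => Real.exp (a * y)) (a * Real.exp (a * x)) x := by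
    intro a x
    simpa [mul_comm] using (((hasDerivAt_id x).const_mul a).exp)
  have hce : ∀ a : ℝ, Continuous (fun x : ℝ => Real.exp (a * x)) := fun a =>
    Real.continuous_exp.comp (continuous_const.mul continuous_id)
  have hf' : ∀ x, HasDerivAt f (C₀ * (ζ₁ * Real.exp (ζ₁ * x) - ζ₂ * Real.exp (ζ₂ * x))) x :=
    fun x => ((hx1 ζ₁ x).sub (hx1 ζ₂ x)).const_mul C₀
  have hderiv : deriv f = fun x => C₀ * (ζ₁ * Real.exp (ζ₁ * x) - ζ₂ * Real.exp (ζ₂ * x)) :=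
    funext fun x => (hf' x).deriv
  have hf'' : ∀ x, HasDerivAt (deriv f)
      (C₀ * (ζ₁^2 * Real.exp (ζ₁ * x) - ζ₂^2 * Real.exp (ζ₂ * x))) x := by
    intro x
    rw [hderiv]
    have := (((hx1 ζ₁ x).const_mul ζ₁).sub ((hx1 ζ₂ x).const_mul ζ₂)).const_mul C₀
    convert this using 1
    all_goals first | rfl | ring | (funext y; simp)
  -- g is strictly increasing, zero at b₀
  have hg : ∀ x, HasDerivAt (fun y => ζ₁^2 * Real.exp (ζ₁ * y) - ζ₂^2 * Real.exp (ζ₂ * y))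
      (ζ₁^3 * Real.exp (ζ₁ * x) - ζ₂^3 * Real.exp (ζ₂ * x)) x := by
    intro x
    have := ((hx1 ζ₁ x).const_mul (ζ₁^2)).sub ((hx1 ζ₂ x).const_mul (ζ₂^2))
    convert this using 1
    all_goals first | rfl | ring | (funext y; simp)
  have hgmono : StrictMono (fun y => ζ₁^2 * Real.exp (ζ₁ * y) - ζ₂^2 * Real.exp (ζ₂ * y)) := by
    apply strictMono_of_deriv_pos
    intro x
    rw [(hg x).deriv]
    have h1 := mul_pos (pow_pos hζ₁ 3) (Real.exp_pos (ζ₁ * x))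
    have h2 : ζ₂ ^ 3 < 0 := Odd.pow_neg (by decide) hζ₂
    have h3 := mul_neg_of_neg_of_pos h2 (Real.exp_pos (ζ₂ * x))
    linarith
  have hkey : ∀ x, x < b₀ → ζ₁^2 * Real.exp (ζ₁ * x) - ζ₂^2 * Real.exp (ζ₂ * x) < 0 := by
    intro x hx
    have h := hgmono hx
    simp only at h
    linarith [sub_eq_zero.mpr hb₀]
  have hfcont : ContinuousOn f (Set.Icc 0 b₀) :=
    (continuous_const.mul ((hce ζ₁).sub (hce ζ₂))).continuousOn
  have hdpos : ∀ x : ℝ, 0 < C₀ * (ζ₁ * Real.exp (ζ₁ * x) - ζ₂ * Real.exp (ζ₂ * x)) := by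
    intro x
    have h1 := mul_pos hζ₁ (Real.exp_pos (ζ₁ * x))
    have h2 := mul_neg_of_neg_of_pos hζ₂ (Real.exp_pos (ζ₂ * x))
    exact mul_pos hC₀ (by linarith)
  have hmono : StrictMonoOn f (Set.Icc 0 b₀) := by
    apply strictMonoOn_of_deriv_pos (convex_Icc 0 b₀) hfcont
    intro x _
    rw [hderiv]
    exact hdpos x
  have hconc : StrictConcaveOn ℝ (Set.Icc 0 b₀) f := by
    apply strictConcaveOn_of_deriv2_neg (convex_Icc 0 b₀) hfcont
    intro x hx
    rw [interior_Icc] at hx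
    show deriv (deriv f) x < 0
    rw [(hf'' x).deriv]
    exact mul_neg_of_pos_of_neg hC₀ (hkey x hx.2)
  refine ⟨hmono, hconc, ?_⟩
  intro x hx
  have hanti : AntitoneOn (deriv f) (Set.Icc 0 b₀) := by
    apply antitoneOn_of_deriv_nonpos (convex_Icc 0 b₀)
    · rw [hderiv]
      exact (continuous_const.mul
        ((continuous_const.mul (hce ζ₁)).sub (continuous_const.mul (hce ζ₂)))).continuousOn
    · intro y _
      exact (hf'' y).differentiableAt.differentiableWithinAt
    · intro y hy
      rw [interior_Icc] at hy
      rw [(hf'' y).deriv]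
      exact (mul_neg_of_pos_of_neg hC₀ (hkey y hy.2)).le
  have hb₀mem : b₀ ∈ Set.Icc 0 b₀ := ⟨le_trans hx.1 hx.2, le_refl b₀⟩
  have h1 := hanti hx hb₀mem hx.2
  have hdb : deriv f b₀ = 1 := by
    rw [hderiv]
    exact one_div_mul_cancel hD.ne'
  linarith
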